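/- For every real α > 0, the function U(k) = (1/2)·k/(2k−1) − α/(k+1) is quasi-convex on [1, ∞): for all real numbers 1 ≤ k₁ ≤ k₂ ≤ k₃, U(k₂) ≤ max(U(k₁), U(k₃)). -/
import Mathlib

lemma stmt_15_diff (α a b : ℝ) (ha : 1 ≤ a) (hb : 1 ≤ b) :
    ((1 / 2) * (b / (2 * b - 1)) - α / (b + 1)) -
      ((1 / 2) * (a / (2 * a - 1)) - α / (a + 1)) =
    (b - a) * (2 * α * (2 * a - 1) * (2 * b - 1) - (a + 1) * (b + 1)) /
      (2 * ((2 * a - 1) * (2 * b - 1) * (a + 1) * (b + 1))) := by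
  have h1 : (2 * a - 1) ≠ 0 := by nlinarith
  have h2 : (2 * b - 1) ≠ 0 := by nlinarith
  have h3 : (a + 1) ≠ 0 := by nlinarith
  have h4 : (b + 1) ≠ 0 := by nlinarith
  field_simp
  ring

/-- Worked example after Proposition 11: for every `α > 0`, the buyer's utility
`U(k) = (1/2)·k/(2k−1) − α/(k+1)` is quasi-convex on `[1,∞)`: for all
`1 ≤ k₁ ≤ k₂ ≤ k₃`, `U(k₂) ≤ max (U(k₁)) (U(k₃))`. -/
theorem stmt_15 (α : ℝ) (hα : 0 < α) (U : ℝ → ℝ)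
    (hU : ∀ k, U k = (1 / 2) * (k / (2 * k - 1)) - α / (k + 1))
    (k₁ k₂ k₃ : ℝ) (h1 : 1 ≤ k₁) (h12 : k₁ ≤ k₂) (h23 : k₂ ≤ k₃) :
    U k₂ ≤ max (U k₁) (U k₃) := by
  have h2 : 1 ≤ k₂ := le_trans h1 h12
  have h3 : 1 ≤ k₃ := le_trans h2 h23
  rcases le_or_gt (U k₂) (U k₁) with h | h
  · exact le_max_of_le_left h
  · refine le_max_of_le_right ?_
    -- From U k₁ < U k₂ deduce the key polynomial inequality
    have hd12 := stmt_15_diff α k₁ k₂ h1 h2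
    have hd23 := stmt_15_diff α k₂ k₃ h2 h3
    have hpos12 : 0 < (k₂ - k₁) * (2 * α * (2 * k₁ - 1) * (2 * k₂ - 1) - (k₁ + 1) * (k₂ + 1)) /
        (2 * ((2 * k₁ - 1) * (2 * k₂ - 1) * (k₁ + 1) * (k₂ + 1))) := by
      rw [← hd12, ← hU, ← hU]; linarith
    have hden12 : 0 < 2 * ((2 * k₁ - 1) * (2 * k₂ - 1) * (k₁ + 1) * (k₂ + 1)) := by
      have := mul_pos (mul_pos (mul_pos (show (0:ℝ) < 2*k₁-1 by linarith)
        (show (0:ℝ) < 2*k₂-1 by linarith)) (show (0:ℝ) < k₁+1 by linarith))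
        (show (0:ℝ) < k₂+1 by linarith)
      linarith
    have hnum12 : 0 < (k₂ - k₁) * (2 * α * (2 * k₁ - 1) * (2 * k₂ - 1) - (k₁ + 1) * (k₂ + 1)) :=
      (div_pos_iff.mp hpos12).resolve_right (fun ⟨_, hneg⟩ => absurd hden12 (not_lt.mpr hneg.le)) |>.1
    have hlt : k₁ < k₂ := by
      rcases lt_or_ge k₁ k₂ with h' | h'
      · exact h'
      · exfalso
        have heq : k₂ = k₁ := le_antisymm h' h12
        rw [heq] at hnum12
        simp at hnum12
    have hkey : 0 < 2 * α * (2 * k₁ - 1) * (2 * k₂ - 1) - (k₁ + 1) * (k₂ + 1) := by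
      by_contra hcon
      push_neg at hcon
      nlinarith
    -- deduce the same at (k₂, k₃) using that (k+1)/(2k-1) is decreasing
    have hkey23 : 0 ≤ 2 * α * (2 * k₂ - 1) * (2 * k₃ - 1) - (k₂ + 1) * (k₃ + 1) := by
      nlinarith [mul_pos (show (0:ℝ) < 2*k₂-1 by linarith) (show (0:ℝ) < 2*k₃-1 by linarith),
        mul_pos (show (0:ℝ) < 2*k₁-1 by linarith) (show (0:ℝ) < 2*k₂-1 by linarith),
        mul_nonneg (mul_nonneg hα.le (show (0:ℝ) ≤ k₂-k₁ by linarith)) (show (0:ℝ) ≤ k₃-k₂ by linarith),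
        mul_nonneg (mul_nonneg hα.le (show (0:ℝ) ≤ 2*k₂-1 by linarith)) (show (0:ℝ) ≤ k₃-k₂ by linarith),
        mul_nonneg (mul_nonneg hα.le (show (0:ℝ) ≤ 2*k₃-1 by linarith)) (show (0:ℝ) ≤ k₂-k₁ by linarith)]
    have hden23 : 0 < 2 * ((2 * k₂ - 1) * (2 * k₃ - 1) * (k₂ + 1) * (k₃ + 1)) := by
      have := mul_pos (mul_pos (mul_pos (show (0:ℝ) < 2*k₂-1 by linarith)
        (show (0:ℝ) < 2*k₃-1 by linarith)) (show (0:ℝ) < k₂+1 by linarith))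
        (show (0:ℝ) < k₃+1 by linarith)
      linarith
    have : 0 ≤ U k₃ - U k₂ := by
      rw [hU, hU, hd23]
      apply div_nonneg _ hden23.le
      exact mul_nonneg (by linarith) hkey23
    linarith
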